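/- arXiv:1510.02847 — 6 statements merged into one kernel-verified Lean document; each statement's English description precedes it below -/
import Mathlib

section
/- Under the stated setting and Invariants 1 and 2, every classifier h ∈ H with err_D(h) − err_D(h*) ≤ ε/2 satisfies err(h, Ŝ) − err(ĥ, Ŝ) ≤ 3ε/4. -/
set_option maxHeartbeats 1000000

open MeasureTheory

/-- Empirical error of a classifier (labels encoded as `Bool`, standing for `{-1,+1}`)
on a finite labeled dataset: the fraction of examples it misclassifies. -/
noncomputable def empErr {X : Type*} (h : X → Bool) (S : List (X × Bool)) : ℝ :=
  (S.countP (fun p => h p.1 != p.2) : ℝ) / S.length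

/-- Empirical disagreement of two classifiers on a finite list of points. -/
noncomputable def empDis {X : Type*} (h h' : X → Bool) (xs : List X) : ℝ :=
  (xs.countP (fun x => h x != h' x) : ℝ) / xs.length

/-- True error of a classifier under a labeled data distribution `D`. -/
noncomputable def trueErr {X : Type*} [MeasurableSpace X]
    (D : Measure (X × Bool)) (h : X → Bool) : ℝ :=
  (D {p | h p.1 ≠ p.2}).toReal

lemma countP_le_add {α : Type*} (l : List α) (p q r : α → Bool)
    (h : ∀ a ∈ l, p a = true → q a = true ∨ r a = true) :
    l.countP p ≤ l.countP q + l.countP r := by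
  induction l with
  | nil => simp
  | cons a l ih =>
    have hi := ih (fun b hb => h b (List.mem_cons_of_mem a hb))
    simp only [List.countP_cons]
    by_cases hp : p a = true
    · rcases h a (List.mem_cons_self) hp with hq | hr
      · simp [hp, hq]; split_ifs <;> omega
      · simp [hp, hr]; split_ifs <;> omega
    · simp [hp]; split_ifs <;> omega

lemma stmt_1_dis {X : Type*} (h h' : X → Bool) (xs : List X) (yhs : List Bool)
    (hlen' : yhs.length = xs.length) :
    empDis h h' xs ≤ empErr h (xs.zip yhs) + empErr h' (xs.zip yhs) := by
  have hz : (xs.zip yhs).length = xs.length := by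
    rw [List.length_zip, hlen', min_self]
  have hmap : (xs.zip yhs).map Prod.fst = xs :=
    List.map_fst_zip (le_of_eq hlen'.symm)
  have hc : xs.countP (fun x => h x != h' x)
      = (xs.zip yhs).countP (fun p => h p.1 != h' p.1) := by
    conv_lhs => rw [← hmap]
    rw [List.countP_map]
    rfl
  have hkey : (xs.zip yhs).countP (fun p => h p.1 != h' p.1)
      ≤ (xs.zip yhs).countP (fun p => h p.1 != p.2)
        + (xs.zip yhs).countP (fun p => h' p.1 != p.2) := by
    apply countP_le_add
    intro a _ hp
    cases hha : h a.1 <;> cases hha' : h' a.1 <;> cases hy : a.2 <;> simp_all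
  unfold empDis empErr
  rw [hc, hz]
  rcases Nat.eq_zero_or_pos xs.length with h0 | h0
  · simp [h0]
  · rw [← add_div]
    gcongr
    exact_mod_cast hkey

lemma empErr_nonneg {X : Type*} (h : X → Bool) (S : List (X × Bool)) :
    0 ≤ empErr h S := by
  unfold empErr; positivity

/-- Lemma "low true excess error implies low empirical excess error":
under Invariants 1 and 2, any `h ∈ H` with true excess error at most `ε/2`
has empirical excess error on `Ŝ` at most `3ε/4`. -/
theorem stmt_1 {X : Type*} [MeasurableSpace X]
    (D : Measure (X × Bool)) [IsProbabilityMeasure D]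
    (H : Set (X → Bool)) (hHmeas : ∀ h ∈ H, Measurable h)
    (hstar : X → Bool) (hstarH : hstar ∈ H)
    (hstaropt : ∀ h ∈ H, trueErr D hstar ≤ trueErr D h)
    (xs : List X) (ys yhs : List Bool)
    (hlen : ys.length = xs.length) (hlen' : yhs.length = xs.length)
    (hherm : X → Bool) (hhhermH : hherm ∈ H)
    (hhhermopt : ∀ h ∈ H, empErr hherm (xs.zip yhs) ≤ empErr h (xs.zip yhs))
    (ε σ : ℝ) (hε : ε ∈ Set.Ioc (0:ℝ) 1) (hσ : 0 ≤ σ)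
    -- Invariant 1 (approximate favorable bias)
    (inv1 : ∀ h ∈ H, ∀ h' ∈ H, trueErr D h' - trueErr D hstar ≤ ε →
      empErr h (xs.zip ys) - empErr h' (xs.zip ys) ≤
        empErr h (xs.zip yhs) - empErr h' (xs.zip yhs) + ε / 16)
    -- Invariant 2 (concentration)
    (inv2a : ∀ h ∈ H, ∀ h' ∈ H,
      |(empErr h (xs.zip ys) - empErr h' (xs.zip ys)) - (trueErr D h - trueErr D h')|
        ≤ σ + Real.sqrt (σ * empDis h h' xs))
    (inv2b : σ + Real.sqrt (σ * empErr hherm (xs.zip yhs)) ≤ ε / 512) :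
    ∀ h ∈ H, trueErr D h - trueErr D hstar ≤ ε / 2 →
      empErr h (xs.zip yhs) - empErr hherm (xs.zip yhs) ≤ 3 * ε / 4 := by
  intro h hH hexc
  obtain ⟨hε0, hε1⟩ := hε
  set e := empErr hherm (xs.zip yhs) with he_def
  set Eh := empErr h (xs.zip yhs) with hEh_def
  have he0 : 0 ≤ e := empErr_nonneg _ _
  have hΔ0 : e ≤ Eh := hhhermopt h hH
  have hse0 : 0 ≤ Real.sqrt (σ * e) := Real.sqrt_nonneg _
  have hσ' : σ ≤ ε / 512 := by linarith
  have hsee : Real.sqrt (σ * e) ≤ ε / 512 - σ := by linarith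
  -- Invariant 1 with roles (hherm, h)
  have key1 := inv1 hherm hhhermH h hH (by linarith)
  -- Invariant 2 with (h, hherm)
  have key2 := abs_le.mp (inv2a h hH hherm hhhermH)
  have htrue : trueErr D h - trueErr D hherm ≤ ε / 2 := by
    have := hstaropt hherm hhhermH; linarith
  -- bound the sqrt term
  have hρ : empDis h hherm xs ≤ Eh + e := stmt_1_dis h hherm xs yhs hlen'
  have hρ0 : 0 ≤ empDis h hherm xs := by unfold empDis; positivity
  have h1 : Real.sqrt (σ * empDis h hherm xs)
      ≤ Real.sqrt (σ * (Eh - e) + 2 * (σ * e)) := by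
    apply Real.sqrt_le_sqrt; nlinarith
  have hA : (0:ℝ) ≤ σ * (Eh - e) := by nlinarith
  have hB : (0:ℝ) ≤ 2 * (σ * e) := by nlinarith
  have h2 : Real.sqrt (σ * (Eh - e) + 2 * (σ * e))
      ≤ Real.sqrt (σ * (Eh - e)) + Real.sqrt (2 * (σ * e)) := by
    have sa := Real.sq_sqrt hA
    have sb := Real.sq_sqrt hB
    have sc := Real.sq_sqrt (by linarith : (0:ℝ) ≤ σ * (Eh - e) + 2 * (σ * e))
    have na := Real.sqrt_nonneg (σ * (Eh - e))
    have nb := Real.sqrt_nonneg (2 * (σ * e))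
    have nc := Real.sqrt_nonneg (σ * (Eh - e) + 2 * (σ * e))
    nlinarith [mul_nonneg na nb]
  have h3 : Real.sqrt (σ * (Eh - e)) ≤ 2 * σ + (Eh - e) / 8 := by
    have sa := Real.sq_sqrt hA
    have na := Real.sqrt_nonneg (σ * (Eh - e))
    nlinarith [sq_nonneg (2 * σ - (Eh - e) / 8)]
  have h4 : Real.sqrt (2 * (σ * e)) ≤ (3 / 2) * (ε / 512 - σ) := by
    have : Real.sqrt (2 * (σ * e)) = Real.sqrt 2 * Real.sqrt (σ * e) :=
      Real.sqrt_mul (by norm_num) _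
    rw [this]
    have h2le : Real.sqrt 2 ≤ 3 / 2 := by
      nlinarith [Real.sq_sqrt (by norm_num : (0:ℝ) ≤ 2), Real.sqrt_nonneg 2]
    exact mul_le_mul h2le hsee hse0 (by norm_num)
  linarith
end

section
/- Under the stated setting and Invariants 1 and 2, every classifier h ∈ H with err(h, Ŝ) − err(ĥ, Ŝ) ≤ 3ε/4 satisfies err_D(h) − err_D(h*) ≤ ε; consequently, writing U for the marginal of D on X and ν = err_D(h*), such an h satisfies U({x : h(x) ≠ h*(x)}) ≤ 2ν + ε. -/
open MeasureTheory

set_option linter.unusedVariables false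

lemma countP_tri {X : Type*} (h h' : X → Bool) :
    ∀ (xs : List X) (ys : List Bool), ys.length = xs.length →
    xs.countP (fun x => h x != h' x) ≤
      (xs.zip ys).countP (fun p => h p.1 != p.2) +
      (xs.zip ys).countP (fun p => h' p.1 != p.2) := by
  intro xs
  induction xs with
  | nil => intro ys _; simp
  | cons x xs ih =>
    intro ys hy
    cases ys with
    | nil => simp at hy
    | cons y ys =>
      have h1 := ih ys (by simpa using hy)
      simp only [List.zip_cons_cons, List.countP_cons]
      cases hx : h x <;> cases hx' : h' x <;> cases y <;>
        simp [hx, hx'] <;> omega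

lemma empDis_nonneg {X : Type*} (h h' : X → Bool) (xs : List X) : 0 ≤ empDis h h' xs := by
  unfold empDis; positivity

lemma empDis_le {X : Type*} (h h' : X → Bool) (xs : List X) (ys : List Bool)
    (hl : ys.length = xs.length) :
    empDis h h' xs ≤ empErr h (xs.zip ys) + empErr h' (xs.zip ys) := by
  unfold empDis empErr
  have hz : (xs.zip ys).length = xs.length := by simp [hl]
  rw [hz, ← add_div]
  rcases Nat.eq_zero_or_pos xs.length with h0 | h0
  · rw [List.length_eq_zero_iff] at h0
    subst h0; simp
  · rw [div_le_div_iff_of_pos_right (by exact_mod_cast h0)]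
    exact_mod_cast countP_tri h h' xs ys hl

set_option maxHeartbeats 1000000 in
/-- Under Invariants 1 and 2, any `h ∈ H` in the empirical `3ε/4`-confidence set
on `Ŝ` has true excess error at most `ε`, and hence (writing `U` for the marginal of
`D` on `X` and `ν = err_D(h*)`) disagrees with `h*` with probability at most `2ν + ε`. -/
theorem stmt_3 {X : Type*} [MeasurableSpace X]
    (D : Measure (X × Bool)) [IsProbabilityMeasure D]
    (H : Set (X → Bool)) (hHmeas : ∀ h ∈ H, Measurable h)
    (hstar : X → Bool) (hstarH : hstar ∈ H)
    (hstaropt : ∀ h ∈ H, trueErr D hstar ≤ trueErr D h)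
    (xs : List X) (ys yhs : List Bool)
    (hlen : ys.length = xs.length) (hlen' : yhs.length = xs.length)
    (hherm : X → Bool) (hhhermH : hherm ∈ H)
    (hhhermopt : ∀ h ∈ H, empErr hherm (xs.zip yhs) ≤ empErr h (xs.zip yhs))
    (ε σ : ℝ) (hε : ε ∈ Set.Ioc (0:ℝ) 1) (hσ : 0 ≤ σ)
    -- Invariant 1 (approximate favorable bias)
    (inv1 : ∀ h ∈ H, ∀ h' ∈ H, trueErr D h' - trueErr D hstar ≤ ε →
      empErr h (xs.zip ys) - empErr h' (xs.zip ys) ≤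
        empErr h (xs.zip yhs) - empErr h' (xs.zip yhs) + ε / 16)
    -- Invariant 2 (concentration)
    (inv2a : ∀ h ∈ H, ∀ h' ∈ H,
      |(empErr h (xs.zip ys) - empErr h' (xs.zip ys)) - (trueErr D h - trueErr D h')|
        ≤ σ + Real.sqrt (σ * empDis h h' xs))
    (inv2b : σ + Real.sqrt (σ * empErr hherm (xs.zip yhs)) ≤ ε / 512) :
    ∀ h ∈ H, empErr h (xs.zip yhs) - empErr hherm (xs.zip yhs) ≤ 3 * ε / 4 →
      trueErr D h - trueErr D hstar ≤ ε ∧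
        ((D.map Prod.fst) {x | h x ≠ hstar x}).toReal ≤ 2 * trueErr D hstar + ε := by
  obtain ⟨hε0, hε1⟩ := hε
  intro h hH hcand
  -- abbreviations
  set a := empErr h (xs.zip ys) with ha
  set b := empErr hstar (xs.zip ys) with hb
  set A := empErr h (xs.zip yhs) with hA
  set B := empErr hstar (xs.zip yhs) with hB
  set m := empErr hherm (xs.zip yhs) with hm
  set ρ := empDis h hstar xs with hρ
  set t := Real.sqrt (σ * ρ) with hts
  set Th := trueErr D h with hTh
  set Ts := trueErr D hstar with hTs
  have hρ0 : 0 ≤ ρ := empDis_nonneg h hstar xs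
  have hm0 : 0 ≤ m := empErr_nonneg hherm (xs.zip yhs)
  have ht0 : 0 ≤ t := Real.sqrt_nonneg _
  have f1 : a - b ≤ A - B + ε / 16 := inv1 h hH hstar hstarH (by rw [sub_self]; exact hε0.le)
  have f2 : |(a - b) - (Th - Ts)| ≤ σ + t := inv2a h hH hstar hstarH
  have f4 : m ≤ B := hhhermopt hstar hstarH
  have f6 : ρ ≤ A + B := empDis_le h hstar xs yhs hlen'
  have f7 : 0 ≤ Th - Ts := by have := hstaropt h hH; linarith
  have f2' := abs_le.mp f2
  -- σ and σ*m bounds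
  have hsr0 : 0 ≤ Real.sqrt (σ * m) := Real.sqrt_nonneg _
  have d2 : σ ≤ ε / 512 := by linarith
  have d1 : σ * m ≤ (ε / 512) ^ 2 := by
    have h1 : Real.sqrt (σ * m) ≤ ε / 512 := by linarith
    have h2 : Real.sqrt (σ * m) ^ 2 = σ * m := Real.sq_sqrt (mul_nonneg hσ hm0)
    nlinarith
  -- bound on ρ and then on t
  have d4 : -(σ + t) ≤ a - b := by linarith [f2'.1]
  have d6 : ρ ≤ 2 * m + 25 * ε / 16 + σ + t := by linarith [hcand]
  have d3 : t ^ 2 = σ * ρ := Real.sq_sqrt (mul_nonneg hσ hρ0)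
  have e1 : σ * ε ≤ ε ^ 2 / 512 := by
    have := mul_le_mul_of_nonneg_right d2 hε0.le
    nlinarith
  have e2 : σ * σ ≤ (ε / 512) ^ 2 := by nlinarith [d2, hσ]
  have d7 : t ^ 2 ≤ (803 / 262144) * ε ^ 2 + σ * t := by
    have hmul : σ * ρ ≤ σ * (2 * m + 25 * ε / 16 + σ + t) :=
      mul_le_mul_of_nonneg_left d6 hσ
    have hexp : σ * (2 * m + 25 * ε / 16 + σ + t)
        = 2 * (σ * m) + (25 / 16) * (σ * ε) + σ * σ + σ * t := by ring
    rw [hexp] at hmul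
    have h1 : (ε / 512) ^ 2 = ε ^ 2 / 262144 := by ring
    rw [h1] at d1 e2
    linarith
  have d8 : t ≤ σ + ε / 17 := by
    nlinarith [sq_nonneg (t - σ - ε / 17), mul_nonneg hσ ht0, sq_nonneg ε, hε0]
  -- part 1
  have part1 : Th - Ts ≤ ε := by
    have : Th - Ts ≤ (a - b) + σ + t := by linarith [f2'.2]
    linarith [hcand, f1, f4, d2, d8, hε0.le]
  refine ⟨part1, ?_⟩
  -- part 2
  have mh : Measurable h := hHmeas h hH
  have mhs : Measurable hstar := hHmeas hstar hstarH
  have hAeq : {x | h x ≠ hstar x} =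
      (h ⁻¹' {true} ∩ hstar ⁻¹' {false}) ∪ (h ⁻¹' {false} ∩ hstar ⁻¹' {true}) := by
    ext x; cases hx : h x <;> cases hy : hstar x <;> simp [hx, hy]
  have hAmeas : MeasurableSet {x | h x ≠ hstar x} := by
    rw [hAeq]
    exact ((mh (measurableSet_singleton true)).inter
      (mhs (measurableSet_singleton false))).union
      ((mh (measurableSet_singleton false)).inter
      (mhs (measurableSet_singleton true)))
  rw [Measure.map_apply measurable_fst hAmeas]
  have hsub : Prod.fst ⁻¹' {x | h x ≠ hstar x} ⊆
      {p : X × Bool | h p.1 ≠ p.2} ∪ {p : X × Bool | hstar p.1 ≠ p.2} := by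
    rintro ⟨x, y⟩ hp
    by_cases hb1 : h x = y
    · right; simp only [Set.mem_setOf_eq]; intro hb2; exact hp (hb1.trans hb2.symm)
    · left; exact hb1
  have hD : D (Prod.fst ⁻¹' {x | h x ≠ hstar x}) ≤
      D {p : X × Bool | h p.1 ≠ p.2} + D {p : X × Bool | hstar p.1 ≠ p.2} :=
    (measure_mono hsub).trans (measure_union_le _ _)
  have hfin1 : D {p : X × Bool | h p.1 ≠ p.2} ≠ ⊤ := measure_ne_top D _
  have hfin2 : D {p : X × Bool | hstar p.1 ≠ p.2} ≠ ⊤ := measure_ne_top D _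
  have htr : (D (Prod.fst ⁻¹' {x | h x ≠ hstar x})).toReal ≤ Th + Ts := by
    have := ENNReal.toReal_mono (by finiteness) hD
    rwa [ENNReal.toReal_add hfin1 hfin2] at this
  have : Th ≤ Ts + ε := by linarith
  linarith
end

section
/- Let d ≥ 1 be a real number and δ, ε ∈ (0, 1). Then there exists an integer n with 2 ≤ n ≤ (64/ε)·(d·ln(512/ε) + ln(24/δ)) such that σ(n, δ/(log₂ n · (log₂ n + 1))) ≤ ε. -/
/-- The generalization-error term `σ(n, δ') = (8/n)·(2d·ln(2en/d) + ln(24/δ'))`. -/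
noncomputable def sigmaVC (d : ℝ) (n : ℕ) (δ' : ℝ) : ℝ :=
  (8 / n) * (2 * d * Real.log (2 * Real.exp 1 * n / d) + Real.log (24 / δ'))

set_option maxHeartbeats 2000000 in
/-- Fact 1: the minimum `n` with `σ(n, δ/(log₂ n (log₂ n + 1))) ≤ ε` is at most
`(64/ε)(d ln(512/ε) + ln(24/δ))`. -/
theorem stmt_4 (d δ ε : ℝ) (hd : 1 ≤ d) (hδ : δ ∈ Set.Ioo (0:ℝ) 1)
    (hε : ε ∈ Set.Ioo (0:ℝ) 1) :
    ∃ n : ℕ, 2 ≤ n ∧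
      (n : ℝ) ≤ (64 / ε) * (d * Real.log (512 / ε) + Real.log (24 / δ)) ∧
      sigmaVC d n (δ / (Real.logb 2 n * (Real.logb 2 n + 1))) ≤ ε := by
  obtain ⟨hδ0, hδ1⟩ := hδ
  obtain ⟨hε0, hε1⟩ := hε
  have hd0 : (0:ℝ) < d := lt_of_lt_of_le one_pos hd
  have hlog2 : (0.6931:ℝ) < Real.log 2 := by have := Real.log_two_gt_d9; linarith
  have hlog2' : Real.log 2 < 0.6932 := by have := Real.log_two_lt_d9; linarith
  have he : Real.exp 1 < 2.7182818286 := Real.exp_one_lt_d9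
  set x := Real.log (512 / ε) with hxdef
  set y := Real.log (24 / δ) with hydef
  have hx6 : (6:ℝ) ≤ x := by
    rw [hxdef, Real.le_log_iff_exp_le (by positivity)]
    have h1 : Real.exp 6 ≤ 2.7182818286 ^ 6 := by
      rw [show (6:ℝ) = ((6:ℕ):ℝ) * 1 by norm_num, Real.exp_nat_mul]
      exact pow_le_pow_left₀ (Real.exp_pos 1).le he.le 6
    have h2 : (512:ℝ) ≤ 512 / ε := by rw [le_div_iff₀ hε0]; nlinarith
    nlinarith [h1, h2]
  have hy3 : (3:ℝ) ≤ y := by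
    rw [hydef, Real.le_log_iff_exp_le (by positivity)]
    have h1 : Real.exp 3 ≤ 2.7182818286 ^ 3 := by
      rw [show (3:ℝ) = ((3:ℕ):ℝ) * 1 by norm_num, Real.exp_nat_mul]
      exact pow_le_pow_left₀ (Real.exp_pos 1).le he.le 3
    have h2 : (24:ℝ) ≤ 24 / δ := by rw [le_div_iff₀ hδ0]; nlinarith
    nlinarith [h1, h2]
  have hx0 : (0:ℝ) < x := by linarith
  have hy0 : (0:ℝ) < y := by linarith
  -- x = 9 log 2 - log ε
  have hx512 : x = 9 * Real.log 2 - Real.log ε := by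
    rw [hxdef, Real.log_div (by norm_num) hε0.ne',
      show (512:ℝ) = 2 ^ (9:ℕ) by norm_num, Real.log_pow]
    push_cast; ring
  have hdx6 : (6:ℝ) ≤ d * x := by nlinarith
  have hxdx : x ≤ d * x := by nlinarith
  have hddx : 6 * d ≤ d * x := by nlinarith
  set A := d * x + y with hAdef
  have hA9 : (9:ℝ) ≤ A := by rw [hAdef]; linarith
  have hA0 : (0:ℝ) < A := by linarith
  set N := 64 / ε * A with hNdef
  have h64 : (64:ℝ) ≤ 64 / ε := by rw [le_div_iff₀ hε0]; nlinarith
  have hN576 : (576:ℝ) ≤ N := by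
    rw [hNdef]
    calc (576:ℝ) = 64 * 9 := by norm_num
    _ ≤ (64 / ε) * A := by
        apply mul_le_mul h64 hA9 (by norm_num) (by positivity)
  have hN0 : (0:ℝ) < N := by linarith
  refine ⟨⌊N⌋₊, ?_, ?_, ?_⟩
  · exact Nat.le_floor (by exact_mod_cast (by linarith : (2:ℝ) ≤ N))
  · exact Nat.floor_le hN0.le
  · set n : ℕ := ⌊N⌋₊ with hndef
    have hn576 : (576:ℝ) ≤ (n:ℝ) := by
      exact_mod_cast Nat.le_floor (α := ℝ) (by exact_mod_cast hN576)
    have hn0 : (0:ℝ) < (n:ℝ) := by linarith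
    have hnN : (n:ℝ) ≤ N := Nat.floor_le hN0.le
    have hn1 : N - 1 ≤ (n:ℝ) := (Nat.sub_one_lt_floor N).le
    set L := Real.logb 2 (n:ℝ) with hLdef
    have hLeq : L = Real.log n / Real.log 2 := by rw [hLdef, Real.logb]
    have hlogn512 : (9:ℝ) * Real.log 2 ≤ Real.log n := by
      have h := Real.log_le_log (by norm_num : (0:ℝ) < 512) (by linarith : (512:ℝ) ≤ n)
      rwa [show (512:ℝ) = 2 ^ (9:ℕ) by norm_num, Real.log_pow, Nat.cast_ofNat] at h
    have hL9 : (9:ℝ) ≤ L := by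
      rw [hLeq, le_div_iff₀ (by linarith : (0:ℝ) < Real.log 2)]
      linarith
    have hL0 : (0:ℝ) < L := by linarith
    have hL10 : (0:ℝ) < L + 1 := by linarith
    -- log N
    have hlogA : Real.log A ≤ (d - 1) + x / 2 + y / 2 := by
      have hdA : A ≤ d * (x * y) := by rw [hAdef]; nlinarith [(mul_nonneg (by linarith : (0:ℝ) ≤ d*x - 6) (by linarith : (0:ℝ) ≤ y - 1))]
      have h1 : Real.log A ≤ Real.log (d * (x * y)) := Real.log_le_log hA0 hdA
      rw [Real.log_mul hd0.ne' (by positivity), Real.log_mul hx0.ne' hy0.ne'] at h1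
      have hld : Real.log d ≤ d - 1 := Real.log_le_sub_one_of_pos hd0
      have hlx : Real.log x ≤ x / 2 := by
        have h := Real.log_le_sub_one_of_pos (show (0:ℝ) < x / 2 by linarith)
        rw [Real.log_div hx0.ne' (by norm_num)] at h
        linarith
      have hly : Real.log y ≤ y / 2 := by
        have h := Real.log_le_sub_one_of_pos (show (0:ℝ) < y / 2 by linarith)
        rw [Real.log_div hy0.ne' (by norm_num)] at h
        linarith
      linarith
    have hlogN : Real.log N = x - 3 * Real.log 2 + Real.log A := by
      rw [hNdef, Real.log_mul (by positivity) hA0.ne',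
        Real.log_div (by norm_num) hε0.ne',
        show (64:ℝ) = 2 ^ (6:ℕ) by norm_num, Real.log_pow]
      push_cast
      linarith [hx512]
    have hlogn : Real.log n ≤ 1.5 * x + d + y / 2 := by
      have h := Real.log_le_log hn0 hnN
      rw [hlogN] at h
      linarith
    have hM : L ≤ 1.45 * (1.5 * x + d + y / 2) := by
      rw [hLeq, div_le_iff₀ (by linarith : (0:ℝ) < Real.log 2)]
      nlinarith [hlogn, hlog2, hx6, hy3, hd0.le]
    -- bound on log(2 e n / d)
    have hP : Real.log (2 * Real.exp 1 * (n:ℝ) / d) ≤ x + Real.log x + y / (d * x) := by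
      have harg : 2 * Real.exp 1 * (n:ℝ) / d ≤ 2 * Real.exp 1 * N / d := by
        gcongr
      have h1 : Real.log (2 * Real.exp 1 * (n:ℝ) / d) ≤ Real.log (2 * Real.exp 1 * N / d) :=
        Real.log_le_log (by positivity) harg
      have h2 : Real.log (2 * Real.exp 1 * N / d)
          = Real.log 2 + 1 + Real.log N - Real.log d := by
        rw [Real.log_div (by positivity) hd0.ne',
          Real.log_mul (by positivity) hN0.ne',
          Real.log_mul (by norm_num) (Real.exp_pos 1).ne', Real.log_exp]
      have h3 : Real.log A - Real.log d = Real.log (x + y / d) := by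
        rw [← Real.log_div hA0.ne' hd0.ne']
        congr 1
        field_simp [hAdef]
        ring
      have h4 : Real.log (x + y / d) ≤ Real.log x + y / (d * x) := by
        have hb : (0:ℝ) < y / d := by positivity
        have h := Real.log_le_sub_one_of_pos (show (0:ℝ) < (x + y / d) / x by positivity)
        rw [Real.log_div (by positivity) hx0.ne'] at h
        have hid : (x + y / d) / x = 1 + y / (d * x) := by field_simp
        rw [hid] at h
        linarith
      rw [h2, hlogN] at h1
      have hAd : Real.log N - Real.log d = x - 3 * Real.log 2 + Real.log (x + y / d) := by
        rw [hlogN]; linarith [h3]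
      linarith [h1, h3, h4, hlog2]
    have hPd : d * Real.log (2 * Real.exp 1 * (n:ℝ) / d) ≤ (3/2) * (d * x) + y / 6 := by
      have h1 := mul_le_mul_of_nonneg_left hP hd0.le
      have hid : d * (x + Real.log x + y / (d * x)) = d * x + d * Real.log x + y / x := by
        field_simp
      rw [hid] at h1
      have hlx : Real.log x ≤ x / 2 := by
        have h := Real.log_le_sub_one_of_pos (show (0:ℝ) < x / 2 by linarith)
        rw [Real.log_div hx0.ne' (by norm_num)] at h
        linarith
      have h2 : d * Real.log x ≤ d * (x / 2) := mul_le_mul_of_nonneg_left hlx hd0.le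
      have h3 : y / x ≤ y / 6 := by
        rw [div_le_div_iff₀ hx0 (by norm_num)]
        nlinarith
      linarith
    have hεn : 64 * A - 1 ≤ ε * (n:ℝ) := by
      have h1 : ε * (N - 1) ≤ ε * (n:ℝ) := mul_le_mul_of_nonneg_left hn1 hε0.le
      have h2 : ε * N = 64 * A := by
        rw [hNdef]; field_simp
      nlinarith [h1, h2]
    have hδ'rw : Real.log (24 / (δ / (L * (L + 1))))
        = y + (Real.log L + Real.log (L + 1)) := by
      have h1 : 24 / (δ / (L * (L + 1))) = (24 / δ) * (L * (L + 1)) := by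
        field_simp
      rw [h1, Real.log_mul (by positivity) (by positivity),
        Real.log_mul hL0.ne' hL10.ne', hydef]
    have hlogL : Real.log L + Real.log (L + 1) ≤ 2 * L := by
      have h1 := Real.log_le_sub_one_of_pos hL0
      have h2 := Real.log_le_sub_one_of_pos hL10
      linarith
    -- final
    show sigmaVC d n (δ / (L * (L + 1))) ≤ ε
    rw [sigmaVC, hδ'rw, div_mul_eq_mul_div, div_le_iff₀ hn0]
    linarith [hPd, hlogL, hM, hεn, hxdx, hddx, hdx6, hy3]
end

section
/- Let p ∈ (0, 1], δ ∈ (0, 1), and let (p̂_i)_{i≥1} be a sequence of real numbers in [0, 1] satisfying |p̂_i − p| ≤ √((4/2^i) · ln(4 · 2^i / δ)) for all integers i ≥ 1. Then: (a) there exists an integer i ≥ 1 such that √((4/2^i) · ln(4 · 2^i / δ)) ≤ p̂_i / 3; and (b) for every integer i ≥ 1 satisfying √((4/2^i) · ln(4 · 2^i / δ)) ≤ p̂_i / 3, the estimate p̂ := 2p̂_i / 3 satisfies p̂ ≤ p ≤ 2p̂. -/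
/-- Deterministic correctness of the adaptive doubling procedure for estimating the
bias of a coin: on the concentration event, (a) the stopping condition is eventually
met, and (b) whenever it is met, the returned estimate `p̂ = 2p̂ᵢ/3` satisfies
`p̂ ≤ p ≤ 2p̂`. -/
theorem stmt_6 (p δ : ℝ) (hp : p ∈ Set.Ioc (0:ℝ) 1) (hδ : δ ∈ Set.Ioo (0:ℝ) 1)
    (phat : ℕ → ℝ) (hphat : ∀ i : ℕ, 1 ≤ i → phat i ∈ Set.Icc (0:ℝ) 1)
    (hconc : ∀ i : ℕ, 1 ≤ i →
      |phat i - p| ≤ Real.sqrt ((4 / 2 ^ i) * Real.log (4 * 2 ^ i / δ))) :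
    (∃ i : ℕ, 1 ≤ i ∧
        Real.sqrt ((4 / 2 ^ i) * Real.log (4 * 2 ^ i / δ)) ≤ phat i / 3) ∧
    (∀ i : ℕ, 1 ≤ i →
        Real.sqrt ((4 / 2 ^ i) * Real.log (4 * 2 ^ i / δ)) ≤ phat i / 3 →
        2 * phat i / 3 ≤ p ∧ p ≤ 2 * (2 * phat i / 3)) := by
  obtain ⟨hp0, hp1⟩ := hp
  obtain ⟨hδ0, hδ1⟩ := hδ
  constructor
  · -- part (a)
    obtain ⟨n, hn⟩ := pow_unbounded_of_one_lt (65536 / (p ^ 4 * δ)) (by norm_num : (1:ℝ) < 2)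
    refine ⟨max n 1, le_max_right _ _, ?_⟩
    set i := max n 1 with hi
    have h2i : (65536 / (p ^ 4 * δ) : ℝ) < 2 ^ i :=
      lt_of_lt_of_le hn (pow_le_pow_right₀ (by norm_num) (le_max_left _ _))
    have h2ipos : (0:ℝ) < 2 ^ i := by positivity
    set s := Real.sqrt (2 ^ i) with hs
    set d := Real.sqrt δ with hd
    have hs0 : 0 < s := Real.sqrt_pos.mpr h2ipos
    have hd0 : 0 < d := Real.sqrt_pos.mpr hδ0
    have hs2 : s ^ 2 = 2 ^ i := Real.sq_sqrt h2ipos.le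
    have hd2 : d ^ 2 = δ := Real.sq_sqrt hδ0.le
    have hxpos : (0:ℝ) < 4 * 2 ^ i / δ := by positivity
    have hsqrt_eq : Real.sqrt (4 * 2 ^ i / δ) = 2 * s / d := by
      have h : (4 * 2 ^ i / δ : ℝ) = (2 * s / d) ^ 2 := by
        field_simp
        nlinarith [hs2, hd2]
      rw [h, Real.sqrt_sq (by positivity)]
    have hlog : Real.log (4 * 2 ^ i / δ) ≤ 2 * (2 * s / d) := by
      have h1 : Real.log (Real.sqrt (4 * 2 ^ i / δ)) ≤ Real.sqrt (4 * 2 ^ i / δ) - 1 :=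
        Real.log_le_sub_one_of_pos (Real.sqrt_pos.mpr hxpos)
      have h2 : Real.log (Real.sqrt (4 * 2 ^ i / δ)) = Real.log (4 * 2 ^ i / δ) / 2 :=
        Real.log_sqrt hxpos.le
      rw [hsqrt_eq] at h1 h2
      linarith
    -- from h2i : s * d > 256 / p^2
    have hsd : 256 / p ^ 2 < s * d := by
      have hsq : (256 / p ^ 2) ^ 2 < (s * d) ^ 2 := by
        have : (s * d) ^ 2 = 2 ^ i * δ := by rw [mul_pow, hs2, hd2]
        rw [this]
        rw [div_lt_iff₀ (by positivity)] at h2i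
        rw [div_pow, div_lt_iff₀ (by positivity)]
        nlinarith
      nlinarith [mul_pos hs0 hd0, div_pos (by norm_num : (0:ℝ) < 256) (pow_pos hp0 2)]
    have hf : (4 / 2 ^ i) * Real.log (4 * 2 ^ i / δ) ≤ (p / 4) ^ 2 := by
      have h1 : (4 / 2 ^ i) * Real.log (4 * 2 ^ i / δ) ≤ (4 / 2 ^ i) * (2 * (2 * s / d)) :=
        mul_le_mul_of_nonneg_left hlog (by positivity)
      have h2 : (4 / (2:ℝ) ^ i) * (2 * (2 * s / d)) = 16 / (s * d) := by
        rw [← hs2]; field_simp; ring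
      rw [h2] at h1
      refine h1.trans ?_
      rw [div_le_iff₀ (by positivity), div_pow, div_lt_iff₀ (by positivity)] at *
      nlinarith [mul_pos hs0 hd0, sq_nonneg p]
    have heps : Real.sqrt ((4 / 2 ^ i) * Real.log (4 * 2 ^ i / δ)) ≤ p / 4 := by
      calc Real.sqrt ((4 / 2 ^ i) * Real.log (4 * 2 ^ i / δ))
          ≤ Real.sqrt ((p / 4) ^ 2) := Real.sqrt_le_sqrt hf
        _ = p / 4 := Real.sqrt_sq (by positivity)
    have hc := abs_le.mp ((hconc i (le_max_right _ _)).trans heps)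
    linarith [hc.1, hc.2, heps]
  · -- part (b)
    intro i hi hstop
    have h := abs_le.mp ((hconc i hi).trans hstop)
    constructor <;> linarith [h.1, h.2]
end

section
/- Let a, a', b, b', c be nonnegative real numbers such that a ≤ a' + √(a'·c) + c, b' ≤ b + √(b·c) + c, and a' ≤ b'. Then a ≤ 6·(b + c). -/
lemma sqrt_mul_le_half (x c : ℝ) (hx : 0 ≤ x) (hc : 0 ≤ c) :
    Real.sqrt (x * c) ≤ (x + c) / 2 := by
  nlinarith [Real.sq_sqrt (mul_nonneg hx hc), Real.sqrt_nonneg (x * c),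
    sq_nonneg (x - c), sq_nonneg (Real.sqrt (x * c) - (x + c) / 2)]

/-- If `a ≤ a' + √(a'c) + c`, `b' ≤ b + √(bc) + c`, and `a' ≤ b'` for nonnegative
reals, then `a ≤ 6(b + c)`. -/
theorem stmt_10 (a a' b b' c : ℝ) (ha : 0 ≤ a) (ha' : 0 ≤ a') (hb : 0 ≤ b)
    (hb' : 0 ≤ b') (hc : 0 ≤ c)
    (h1 : a ≤ a' + Real.sqrt (a' * c) + c)
    (h2 : b' ≤ b + Real.sqrt (b * c) + c)
    (h3 : a' ≤ b') :
    a ≤ 6 * (b + c) := by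
  have s1 := sqrt_mul_le_half a' c ha' hc
  have s2 := sqrt_mul_le_half b c hb hc
  linarith
end

section
/- For every measurable classifier h on X and every measurable classifier h' on X satisfying h'(x) = h*(x) for all x ∉ R, it holds that err_O(h) − err_O(h') ≤ err_mix(h) − err_mix(h') + 2η. -/
open MeasureTheory

/-- Error with respect to the oracle labels `y_O` under the joint distribution `Q`
over `(x, y_O, y_W)` (labels encoded as `Bool`, standing for `{-1,+1}`). -/
noncomputable def errO {X : Type*} [MeasurableSpace X]
    (Q : Measure (X × Bool × Bool)) (h : X → Bool) : ℝ :=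
  (Q {p | h p.1 ≠ p.2.1}).toReal

/-- Mixed error: outside `R` the label is inferred to be `h*(x)`; inside `R` the
label comes from `O` when the difference classifier `h^df` predicts `+1` (`true`)
and from `W` when it predicts `-1` (`false`). -/
noncomputable def errMix {X : Type*} [MeasurableSpace X]
    (Q : Measure (X × Bool × Bool)) (R : Set X) (hdf hstar : X → Bool)
    (h : X → Bool) : ℝ :=
  (Q {p | p.1 ∉ R ∧ h p.1 ≠ hstar p.1}).toReal
    + (Q {p | p.1 ∈ R ∧ hdf p.1 = true ∧ h p.1 ≠ p.2.1}).toReal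
    + (Q {p | p.1 ∈ R ∧ hdf p.1 = false ∧ h p.1 ≠ p.2.2}).toReal

/-- Approximate favorable bias of the mixed labels: for any classifier `h` and any
classifier `h'` agreeing with `h*` outside `R`, the gap in oracle errors exceeds the
gap in mixed errors by at most `2η`, where `η` bounds the false-negative mass of the
difference classifier on `R`. -/
theorem stmt_12 {X : Type*} [MeasurableSpace X]
    (Q : Measure (X × Bool × Bool)) [IsProbabilityMeasure Q]
    (R : Set X) (hR : MeasurableSet R)
    (hdf hstar : X → Bool) (hdfm : Measurable hdf) (hstarm : Measurable hstar)
    (η : ℝ) (hη : 0 ≤ η)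
    (hfn : (Q {p | p.1 ∈ R ∧ hdf p.1 = false ∧ p.2.1 ≠ p.2.2}).toReal ≤ η)
    (h h' : X → Bool) (hm : Measurable h) (h'm : Measurable h')
    (hagree : ∀ x ∉ R, h' x = hstar x) :
    errO Q h - errO Q h' ≤ errMix Q R hdf hstar h - errMix Q R hdf hstar h' + 2 * η := by
  classical
  have hT1 : MeasurableSet {p : X × Bool × Bool | p.1 ∈ R} := measurable_fst hR
  have hT2 : MeasurableSet {p : X × Bool × Bool | hdf p.1 = true} :=
    (hdfm.comp measurable_fst) (measurableSet_singleton true)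
  have split : ∀ S : Set (X × Bool × Bool),
      Q S = Q {p | p ∈ S ∧ p.1 ∉ R} + Q {p | p ∈ S ∧ p.1 ∈ R ∧ hdf p.1 = true}
            + Q {p | p ∈ S ∧ p.1 ∈ R ∧ hdf p.1 = false} := by
    intro S
    have e1 : Q (S ∩ {p | p.1 ∈ R}) + Q (S \ {p | p.1 ∈ R}) = Q S :=
      measure_inter_add_diff S hT1
    have e2 : Q ((S ∩ {p | p.1 ∈ R}) ∩ {p | hdf p.1 = true}) +
        Q ((S ∩ {p | p.1 ∈ R}) \ {p | hdf p.1 = true}) = Q (S ∩ {p | p.1 ∈ R}) :=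
      measure_inter_add_diff _ hT2
    have s1 : S \ {p : X × Bool × Bool | p.1 ∈ R} = {p | p ∈ S ∧ p.1 ∉ R} := by
      ext p; simp [Set.mem_diff]
    have s2 : (S ∩ {p : X × Bool × Bool | p.1 ∈ R}) ∩ {p | hdf p.1 = true}
        = {p | p ∈ S ∧ p.1 ∈ R ∧ hdf p.1 = true} := by
      ext p; simp [Set.mem_inter_iff, and_assoc]; tauto
    have s3 : (S ∩ {p : X × Bool × Bool | p.1 ∈ R}) \ {p | hdf p.1 = true}
        = {p | p ∈ S ∧ p.1 ∈ R ∧ hdf p.1 = false} := by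
      ext p; simp [Set.mem_diff, Set.mem_inter_iff, and_assoc]; tauto
    rw [← e1, ← e2, s1, s2, s3]; ring
  -- the six pieces
  set A : Set (X × Bool × Bool) := {p | p.1 ∉ R ∧ h p.1 ≠ p.2.1} with hA
  set M : Set (X × Bool × Bool) := {p | p.1 ∈ R ∧ hdf p.1 = true ∧ h p.1 ≠ p.2.1} with hM
  set C : Set (X × Bool × Bool) := {p | p.1 ∈ R ∧ hdf p.1 = false ∧ h p.1 ≠ p.2.1} with hC
  set A' : Set (X × Bool × Bool) := {p | p.1 ∉ R ∧ h' p.1 ≠ p.2.1} with hA'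
  set M' : Set (X × Bool × Bool) := {p | p.1 ∈ R ∧ hdf p.1 = true ∧ h' p.1 ≠ p.2.1} with hM'
  set C' : Set (X × Bool × Bool) := {p | p.1 ∈ R ∧ hdf p.1 = false ∧ h' p.1 ≠ p.2.1} with hC'
  set B : Set (X × Bool × Bool) := {p | p.1 ∉ R ∧ h p.1 ≠ hstar p.1} with hB
  set B' : Set (X × Bool × Bool) := {p | p.1 ∉ R ∧ h' p.1 ≠ hstar p.1} with hB'
  set D : Set (X × Bool × Bool) := {p | p.1 ∈ R ∧ hdf p.1 = false ∧ h p.1 ≠ p.2.2} with hD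
  set D' : Set (X × Bool × Bool) := {p | p.1 ∈ R ∧ hdf p.1 = false ∧ h' p.1 ≠ p.2.2} with hD'
  set E : Set (X × Bool × Bool) := {p | p.1 ∈ R ∧ hdf p.1 = false ∧ p.2.1 ≠ p.2.2} with hE
  have splitO : Q {p : X × Bool × Bool | h p.1 ≠ p.2.1} = Q A + Q M + Q C := by
    have e1 : {p : X × Bool × Bool | p ∈ {p : X × Bool × Bool | h p.1 ≠ p.2.1} ∧ p.1 ∉ R} = A := by
      ext p; simp [hA]; tauto
    have e2 : {p : X × Bool × Bool | p ∈ {p : X × Bool × Bool | h p.1 ≠ p.2.1} ∧ p.1 ∈ R ∧ hdf p.1 = true} = M := by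
      ext p; simp [hM]; tauto
    have e3 : {p : X × Bool × Bool | p ∈ {p : X × Bool × Bool | h p.1 ≠ p.2.1} ∧ p.1 ∈ R ∧ hdf p.1 = false} = C := by
      ext p; simp [hC]; tauto
    rw [split {p : X × Bool × Bool | h p.1 ≠ p.2.1}, e1, e2, e3]
  have splitO' : Q {p : X × Bool × Bool | h' p.1 ≠ p.2.1} = Q A' + Q M' + Q C' := by
    have e1 : {p : X × Bool × Bool | p ∈ {p : X × Bool × Bool | h' p.1 ≠ p.2.1} ∧ p.1 ∉ R} = A' := by
      ext p; simp [hA']; tauto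
    have e2 : {p : X × Bool × Bool | p ∈ {p : X × Bool × Bool | h' p.1 ≠ p.2.1} ∧ p.1 ∈ R ∧ hdf p.1 = true} = M' := by
      ext p; simp [hM']; tauto
    have e3 : {p : X × Bool × Bool | p ∈ {p : X × Bool × Bool | h' p.1 ≠ p.2.1} ∧ p.1 ∈ R ∧ hdf p.1 = false} = C' := by
      ext p; simp [hC']; tauto
    rw [split {p : X × Bool × Bool | h' p.1 ≠ p.2.1}, e1, e2, e3]
  have hB'0 : Q B' = 0 := by
    have hsub : B' ⊆ (∅ : Set (X × Bool × Bool)) := fun p hp =>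
      absurd (hagree p.1 hp.1) hp.2
    exact measure_mono_null hsub measure_empty
  have ineq1 : Q A ≤ Q A' + Q B := by
    refine le_trans (measure_mono ?_) (measure_union_le _ _)
    intro p hp
    by_cases hh : h p.1 = hstar p.1
    · left; exact ⟨hp.1, by rw [hagree p.1 hp.1, ← hh]; exact hp.2⟩
    · right; exact ⟨hp.1, hh⟩
  have ineq2 : Q C ≤ Q E + Q D := by
    refine le_trans (measure_mono ?_) (measure_union_le _ _)
    intro p hp
    by_cases hyy : p.2.1 = p.2.2
    · right; exact ⟨hp.1, hp.2.1, by rw [← hyy]; exact hp.2.2⟩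
    · left; exact ⟨hp.1, hp.2.1, hyy⟩
  have ineq3 : Q D' ≤ Q E + Q C' := by
    refine le_trans (measure_mono ?_) (measure_union_le _ _)
    intro p hp
    by_cases hyy : p.2.1 = p.2.2
    · right; exact ⟨hp.1, hp.2.1, by rw [hyy]; exact hp.2.2⟩
    · left; exact ⟨hp.1, hp.2.1, hyy⟩
  have key : Q {p : X × Bool × Bool | h p.1 ≠ p.2.1} + Q M' + Q D'
      ≤ Q B + Q M + Q D + Q E + Q E + Q {p : X × Bool × Bool | h' p.1 ≠ p.2.1} := by
    rw [splitO, splitO']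
    calc Q A + Q M + Q C + Q M' + Q D'
        ≤ (Q A' + Q B) + Q M + (Q E + Q D) + Q M' + (Q E + Q C') := by
          gcongr
      _ = Q B + Q M + Q D + Q E + Q E + (Q A' + Q M' + Q C') := by ring
  have hfin : ∀ s : Set (X × Bool × Bool), Q s ≠ ⊤ := fun s => measure_ne_top Q s
  have key' := ENNReal.toReal_mono (by
    simp [ENNReal.add_ne_top, hfin]) key
  rw [ENNReal.toReal_add (by simp [ENNReal.add_ne_top, hfin]) (hfin _),
      ENNReal.toReal_add (hfin _) (hfin _)] at key'
  rw [ENNReal.toReal_add (by simp [ENNReal.add_ne_top, hfin]) (hfin _),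
      ENNReal.toReal_add (by simp [ENNReal.add_ne_top, hfin]) (hfin _),
      ENNReal.toReal_add (by simp [ENNReal.add_ne_top, hfin]) (hfin _),
      ENNReal.toReal_add (by simp [ENNReal.add_ne_top, hfin]) (hfin _),
      ENNReal.toReal_add (hfin _) (hfin _)] at key'
  have hEη : (Q E).toReal ≤ η := hfn
  unfold errO errMix
  rw [hB'0]
  simp only [ENNReal.toReal_zero]
  linarith
end
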